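/- Let L be a Leibniz algebra over ℂ, J an ideal of L, and D a derivation of L. Then for every k ≥ 1, (J + D(J))^{(k)} ⊆ J + D^{2^{k−1}}(J^{(k)}), where M^{(1)} = M and M^{(n+1)} = [M^{(n)}, M^{(n)}] denotes the derived series. -/

import Mathlib

/-- The span of all brackets `[x,y]` with `x ∈ M`, `y ∈ N`. -/
def bracketSpan {L : Type*} [AddCommGroup L] [Module ℂ L]
    (b : L →ₗ[ℂ] L →ₗ[ℂ] L) (M N : Submodule ℂ L) : Submodule ℂ L :=
  Submodule.span ℂ {z : L | ∃ x ∈ M, ∃ y ∈ N, z = b x y}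

/-- A submodule `J` of a Leibniz algebra with bracket `b` is an ideal if
`[J,L] ⊆ J` and `[L,J] ⊆ J`. -/
def IsLeibnizIdeal {L : Type*} [AddCommGroup L] [Module ℂ L]
    (b : L →ₗ[ℂ] L →ₗ[ℂ] L) (J : Submodule ℂ L) : Prop :=
  (∀ x ∈ J, ∀ y : L, b x y ∈ J) ∧ (∀ x ∈ J, ∀ y : L, b y x ∈ J)

/-- The derived series of a submodule `M`: `leibnizDerivedSeries b M n = M^{(n+1)}`, i.e.
`leibnizDerivedSeries b M 0 = M (= M^{(1)})` and `M^{(n+1)} = [M^{(n)}, M^{(n)}]`. -/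
def leibnizDerivedSeries {L : Type*} [AddCommGroup L] [Module ℂ L]
    (b : L →ₗ[ℂ] L →ₗ[ℂ] L) (M : Submodule ℂ L) : ℕ → Submodule ℂ L
  | 0 => M
  | n + 1 => bracketSpan b (leibnizDerivedSeries b M n) (leibnizDerivedSeries b M n)

open Finset

section Aux
variable {L : Type*} [AddCommGroup L] [Module ℂ L]

lemma mem_bracketSpan (b : L →ₗ[ℂ] L →ₗ[ℂ] L) {M N : Submodule ℂ L} {x y : L}
    (hx : x ∈ M) (hy : y ∈ N) : b x y ∈ bracketSpan b M N :=
  Submodule.subset_span ⟨x, hx, y, hy, rfl⟩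

lemma bracketSpan_le (b : L →ₗ[ℂ] L →ₗ[ℂ] L) {M N P : Submodule ℂ L}
    (h : ∀ x ∈ M, ∀ y ∈ N, b x y ∈ P) : bracketSpan b M N ≤ P := by
  rw [bracketSpan, Submodule.span_le]
  rintro z ⟨x, hx, y, hy, rfl⟩
  exact h x hx y hy

variable (b : L →ₗ[ℂ] L →ₗ[ℂ] L) (D : Module.End ℂ L)

lemma pow_leibniz (hD : ∀ x y : L, D (b x y) = b (D x) y + b x (D y)) (n : ℕ) (x y : L) :
    (D ^ n) (b x y) =
      ∑ k ∈ range (n + 1), n.choose k • b ((D ^ (n - k)) x) ((D ^ k) y) := by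
  induction n with
  | zero => simp
  | succ n IH =>
    calc
      (D ^ (n + 1)) (b x y) =
          D (∑ k ∈ range (n + 1), n.choose k • b ((D ^ (n - k)) x) ((D ^ k) y)) := by
        rw [pow_succ', Module.End.mul_apply, IH]
      _ = (∑ k ∈ range (n + 1), n.choose k • b ((D ^ (n - k + 1)) x) ((D ^ k) y)) +
          ∑ k ∈ range (n + 1), n.choose k • b ((D ^ (n - k)) x) ((D ^ (k + 1)) y) := by
        rw [map_sum]
        have : ∀ k ∈ range (n + 1),
            D (n.choose k • b ((D ^ (n - k)) x) ((D ^ k) y)) =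
              n.choose k • b ((D ^ (n - k + 1)) x) ((D ^ k) y) +
              n.choose k • b ((D ^ (n - k)) x) ((D ^ (k + 1)) y) := by
          intro k hk
          rw [map_nsmul, hD, smul_add, pow_succ', pow_succ', Module.End.mul_apply,
            Module.End.mul_apply]
        rw [sum_congr rfl this, sum_add_distrib]
      _ = (∑ k ∈ range (n + 1), n.choose k.succ • b ((D ^ (n - k)) x) ((D ^ (k + 1)) y)) +
            1 • b ((D ^ (n + 1)) x) ((D ^ 0) y) +
          ∑ k ∈ range (n + 1), n.choose k • b ((D ^ (n - k)) x) ((D ^ (k + 1)) y) := ?_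
      _ = ((∑ k ∈ range (n + 1), n.choose k • b ((D ^ (n - k)) x) ((D ^ (k + 1)) y)) +
            ∑ k ∈ range (n + 1), n.choose k.succ • b ((D ^ (n - k)) x) ((D ^ (k + 1)) y)) +
            1 • b ((D ^ (n + 1)) x) ((D ^ 0) y) := by
        rw [add_comm, add_assoc]
      _ = (∑ k ∈ range (n + 1),
            (n + 1).choose (k + 1) • b ((D ^ (n + 1 - (k + 1))) x) ((D ^ (k + 1)) y)) +
            1 • b ((D ^ (n + 1)) x) ((D ^ 0) y) := by
        simp_rw [Nat.choose_succ_succ, Nat.succ_sub_succ, add_smul, sum_add_distrib]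
      _ = ∑ k ∈ range (n + 1 + 1),
            (n + 1).choose k • b ((D ^ (n + 1 - k)) x) ((D ^ k) y) := by
        rw [sum_range_succ' _ (n + 1), Nat.choose_zero_right, Nat.sub_zero]
    congr
    refine (sum_range_succ' _ _).trans (congr_arg₂ (· + ·) ?_ ?_)
    · rw [sum_range_succ, Nat.choose_succ_self, zero_smul, add_zero]
      refine sum_congr rfl fun k hk => ?_
      rw [mem_range] at hk
      have h : n - (k + 1) + 1 = n - k := by omega
      rw [h]
    · simp

/-- The componentwise bracket on `L × L`. -/
def pairBr : (L × L) →ₗ[ℂ] (L × L) →ₗ[ℂ] (L × L) :=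
  LinearMap.mk₂ ℂ (fun p q => (b p.1 q.1, b p.2 q.2))
    (fun m₁ m₂ n => by simp [Prod.ext_iff]) (fun c m n => by simp [Prod.ext_iff])
    (fun m n₁ n₂ => by simp [Prod.ext_iff]) (fun c m n => by simp [Prod.ext_iff])

@[simp] lemma pairBr_apply (p q : L × L) : pairBr b p q = (b p.1 q.1, b p.2 q.2) := rfl

variable (J : Submodule ℂ L)

/-- The invariant submodule of pairs `(w, s)`. -/
def Rset (n : ℕ) : Submodule ℂ (L × L) where
  carrier := {p | p.1 ∈ leibnizDerivedSeries b J n ∧ (∀ i < 2 ^ n, (D ^ i) p.1 ∈ J) ∧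
      ((2 ^ n).factorial : ℂ) • p.2 - (D ^ (2 ^ n)) p.1 ∈ J}
  add_mem' := by
    rintro p q ⟨h1, h2, h3⟩ ⟨g1, g2, g3⟩
    refine ⟨add_mem h1 g1, fun i hi => ?_, ?_⟩
    · have e : (D ^ i) ((p + q).1) = (D ^ i) p.1 + (D ^ i) q.1 := by
        rw [Prod.fst_add, map_add]
      rw [e]; exact add_mem (h2 i hi) (g2 i hi)
    · have e : ((2 ^ n).factorial : ℂ) • (p + q).2 - (D ^ (2 ^ n)) ((p + q).1)
          = (((2 ^ n).factorial : ℂ) • p.2 - (D ^ (2 ^ n)) p.1)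
            + (((2 ^ n).factorial : ℂ) • q.2 - (D ^ (2 ^ n)) q.1) := by
        rw [Prod.fst_add, Prod.snd_add, map_add, smul_add]; abel
      rw [e]; exact add_mem h3 g3
  zero_mem' := ⟨zero_mem _, fun i hi => by simp, by simp⟩
  smul_mem' := by
    rintro c p ⟨h1, h2, h3⟩
    refine ⟨Submodule.smul_mem _ c h1, fun i hi => ?_, ?_⟩
    · have e : (D ^ i) ((c • p).1) = c • (D ^ i) p.1 := by
        rw [Prod.smul_fst, map_smul]
      rw [e]; exact Submodule.smul_mem _ c (h2 i hi)
    · have e : ((2 ^ n).factorial : ℂ) • (c • p).2 - (D ^ (2 ^ n)) ((c • p).1)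
          = c • (((2 ^ n).factorial : ℂ) • p.2 - (D ^ (2 ^ n)) p.1) := by
        rw [Prod.smul_fst, Prod.smul_snd, map_smul, smul_sub, smul_comm]
      rw [e]; exact Submodule.smul_mem _ c h3

lemma mem_Rset {n : ℕ} {p : L × L} :
    p ∈ Rset b D J n ↔ p.1 ∈ leibnizDerivedSeries b J n ∧ (∀ i < 2 ^ n, (D ^ i) p.1 ∈ J) ∧
      ((2 ^ n).factorial : ℂ) • p.2 - (D ^ (2 ^ n)) p.1 ∈ J := Iff.rfl

lemma Rset_bracket (hJ : IsLeibnizIdeal b J)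
    (hD : ∀ x y : L, D (b x y) = b (D x) y + b x (D y)) {n : ℕ} {p q : L × L}
    (hp : p ∈ Rset b D J n) (hq : q ∈ Rset b D J n) :
    pairBr b p q ∈ Rset b D J (n + 1) := by
  obtain ⟨hp1, hp2, hp3⟩ := hp
  obtain ⟨hq1, hq2, hq3⟩ := hq
  set m := 2 ^ n with hm
  have hmpos : 0 < m := Nat.pow_pos (by norm_num)
  have hM : 2 ^ (n + 1) = 2 * m := by rw [pow_succ]; ring
  refine ⟨?_, ?_, ?_⟩
  · show b p.1 q.1 ∈ leibnizDerivedSeries b J (n + 1)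
    simp only [leibnizDerivedSeries]
    exact mem_bracketSpan b hp1 hq1
  · intro i hi
    rw [hM] at hi
    show (D ^ i) (b p.1 q.1) ∈ J
    rw [pow_leibniz b D hD i]
    refine Submodule.sum_mem _ fun k hk => ?_
    rw [mem_range] at hk
    refine nsmul_mem ?_ _
    by_cases hc : i - k < m
    · exact hJ.1 _ (hp2 _ hc) _
    · exact hJ.2 _ (hq2 _ (by omega)) _
  · show ((2 ^ (n+1)).factorial : ℂ) • (b p.2 q.2) - (D ^ (2 ^ (n+1))) (b p.1 q.1) ∈ J
    rw [hM]
    set j1 : L := (m.factorial : ℂ) • p.2 - (D ^ m) p.1 with hj1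
    set j2 : L := (m.factorial : ℂ) • q.2 - (D ^ m) q.1 with hj2
    have e1 : (D ^ m) p.1 = (m.factorial : ℂ) • p.2 - j1 := by rw [hj1]; abel
    have e2 : (D ^ m) q.1 = (m.factorial : ℂ) • q.2 - j2 := by rw [hj2]; abel
    have hsum := pow_leibniz b D hD (2 * m) p.1 q.1
    have hmem : m ∈ range (2 * m + 1) := by rw [mem_range]; omega
    rw [← Finset.add_sum_erase _ _ hmem] at hsum
    have h2m : 2 * m - m = m := by omega
    rw [h2m] at hsum
    have hrest : ∑ k ∈ (range (2 * m + 1)).erase m,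
        (2 * m).choose k • b ((D ^ (2 * m - k)) p.1) ((D ^ k) q.1) ∈ J := by
      refine Submodule.sum_mem _ fun k hk => ?_
      obtain ⟨hkm, hkr⟩ := Finset.mem_erase.mp hk
      rw [mem_range] at hkr
      refine nsmul_mem ?_ _
      by_cases hc : 2 * m - k < m
      · exact hJ.1 _ (hp2 _ hc) _
      · exact hJ.2 _ (hq2 _ (by omega)) _
    have hfac : ((2 * m).factorial : ℂ)
        = ((2 * m).choose m : ℂ) * (m.factorial : ℂ) * (m.factorial : ℂ) := by
      have h := Nat.choose_mul_factorial_mul_factorial (show m ≤ 2 * m by omega)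
      rw [h2m] at h
      exact_mod_cast h.symm
    have expand : b ((D ^ m) p.1) ((D ^ m) q.1)
        = (m.factorial : ℂ) • ((m.factorial : ℂ) • b p.2 q.2)
          - (m.factorial : ℂ) • b p.2 j2 - (m.factorial : ℂ) • b j1 q.2 + b j1 j2 := by
      rw [e1, e2]
      simp only [map_sub, map_smul, LinearMap.sub_apply, LinearMap.smul_apply, smul_sub]
      abel
    rw [hsum, expand, ← Nat.cast_smul_eq_nsmul ℂ ((2 * m).choose m), hfac]
    have key : (((2 * m).choose m : ℂ) * (m.factorial : ℂ) * (m.factorial : ℂ)) • b p.2 q.2 -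
        (((2 * m).choose m : ℂ) •
            ((m.factorial : ℂ) • ((m.factorial : ℂ) • b p.2 q.2)
              - (m.factorial : ℂ) • b p.2 j2 - (m.factorial : ℂ) • b j1 q.2 + b j1 j2) +
          ∑ k ∈ (range (2 * m + 1)).erase m,
            (2 * m).choose k • b ((D ^ (2 * m - k)) p.1) ((D ^ k) q.1))
        = ((2 * m).choose m : ℂ) •
            ((m.factorial : ℂ) • b p.2 j2 + (m.factorial : ℂ) • b j1 q.2 - b j1 j2) -
          ∑ k ∈ (range (2 * m + 1)).erase m,
            (2 * m).choose k • b ((D ^ (2 * m - k)) p.1) ((D ^ k) q.1) := by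
      module
    rw [key]
    have hj1J : j1 ∈ J := hp3
    have hj2J : j2 ∈ J := hq3
    exact sub_mem (Submodule.smul_mem _ _ (sub_mem
      (add_mem (Submodule.smul_mem _ _ (hJ.2 _ hj2J _)) (Submodule.smul_mem _ _ (hJ.1 _ hj1J _)))
      (hJ.1 _ hj1J _))) hrest


lemma DSB_le_R (hJ : IsLeibnizIdeal b J)
    (hD : ∀ x y : L, D (b x y) = b (D x) y + b x (D y)) :
    ∀ n, leibnizDerivedSeries (pairBr b)
        (J.map ((LinearMap.id : L →ₗ[ℂ] L).prod D)) n ≤ Rset b D J n := by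
  intro n
  induction n with
  | zero =>
    rw [show leibnizDerivedSeries (pairBr b) (J.map ((LinearMap.id : L →ₗ[ℂ] L).prod D)) 0
        = J.map ((LinearMap.id : L →ₗ[ℂ] L).prod D) from rfl,
      Submodule.map_le_iff_le_comap]
    intro u hu
    refine ⟨hu, fun i hi => ?_, ?_⟩
    · have : i = 0 := by omega
      subst this
      exact hu
    · show ((Nat.factorial (2 ^ 0) : ℂ)) • (D u) - (D ^ 2 ^ 0) (LinearMap.id u) ∈ J
      simp
  | succ n ih =>
    show bracketSpan (pairBr b) _ _ ≤ _
    exact bracketSpan_le (pairBr b) fun p hp q hq =>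
      Rset_bracket b D J hJ hD (ih hp) (ih hq)

lemma DS_mapD_le (n : ℕ) :
    leibnizDerivedSeries b (J.map D) n ≤
      (leibnizDerivedSeries (pairBr b) (J.map ((LinearMap.id : L →ₗ[ℂ] L).prod D)) n).map
        (LinearMap.snd ℂ L L) := by
  induction n with
  | zero =>
    show J.map D ≤ (J.map ((LinearMap.id : L →ₗ[ℂ] L).prod D)).map (LinearMap.snd ℂ L L)
    rintro _ ⟨u, hu, rfl⟩
    exact ⟨(u, D u), ⟨u, hu, rfl⟩, rfl⟩
  | succ n ih =>
    show bracketSpan b _ _ ≤ _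
    refine bracketSpan_le b fun s hs t ht => ?_
    obtain ⟨p, hp, hps⟩ := ih hs
    obtain ⟨q, hq, hqt⟩ := ih ht
    exact ⟨pairBr b p q, mem_bracketSpan (pairBr b) hp hq, by rw [← hps, ← hqt]; rfl⟩

lemma DS_sup_le (hJ : IsLeibnizIdeal b J) (N : Submodule ℂ L) (n : ℕ) :
    leibnizDerivedSeries b (J ⊔ N) n ≤ J ⊔ leibnizDerivedSeries b N n := by
  induction n with
  | zero => exact le_rfl
  | succ n ih =>
    show bracketSpan b _ _ ≤ _
    refine bracketSpan_le b fun x hx y hy => ?_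
    obtain ⟨jx, hjx, ux, hux, rfl⟩ := Submodule.mem_sup.mp (ih hx)
    obtain ⟨jy, hjy, uy, huy, rfl⟩ := Submodule.mem_sup.mp (ih hy)
    have e : b (jx + ux) (jy + uy) = (b jx (jy + uy) + b ux jy) + b ux uy := by
      simp only [map_add, LinearMap.add_apply]; abel
    rw [e]
    exact add_mem (Submodule.mem_sup_left (add_mem (hJ.1 _ hjx _) (hJ.2 _ hjy _)))
      (Submodule.mem_sup_right (mem_bracketSpan b hux huy))

end Aux

theorem leibniz_derived_series_of_ideal_plus_derivation_image'
    {L : Type*} [AddCommGroup L] [Module ℂ L]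
    (b : L →ₗ[ℂ] L →ₗ[ℂ] L)
    (J : Submodule ℂ L) (hJ : IsLeibnizIdeal b J)
    (D : Module.End ℂ L)
    (hD : ∀ x y : L, D (b x y) = b (D x) y + b x (D y)) :
    ∀ k : ℕ, 1 ≤ k →
      leibnizDerivedSeries b (J ⊔ J.map D) (k - 1) ≤
        J ⊔ (leibnizDerivedSeries b J (k - 1)).map (D ^ (2 ^ (k - 1))) := by
  intro k hk
  obtain ⟨n, rfl⟩ : ∃ n, k = n + 1 := ⟨k - 1, by omega⟩
  simp only [Nat.add_sub_cancel]
  refine le_trans (DS_sup_le b J hJ (J.map D) n) (sup_le le_sup_left ?_)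
  intro s hs
  obtain ⟨p, hpB, hps⟩ := DS_mapD_le b D J n hs
  obtain ⟨hw, -, h3⟩ := DSB_le_R b D J hJ hD n hpB
  have hfne : ((2 ^ n).factorial : ℂ) ≠ 0 := by
    exact_mod_cast Nat.factorial_ne_zero (2 ^ n)
  have e : s = ((2 ^ n).factorial : ℂ)⁻¹ •
      ((((2 ^ n).factorial : ℂ) • p.2 - (D ^ 2 ^ n) p.1) + (D ^ 2 ^ n) p.1) := by
    rw [sub_add_cancel, smul_smul, inv_mul_cancel₀ hfne, one_smul]
    exact hps.symm
  rw [e]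
  exact Submodule.smul_mem _ _ (add_mem (Submodule.mem_sup_left h3)
    (Submodule.mem_sup_right (Submodule.mem_map_of_mem hw)))


/-- Let `L` be a Leibniz algebra over ℂ, `J` an ideal and `D` a derivation.
Then for every `k ≥ 1`, `(J + D(J))^{(k)} ⊆ J + D^{2^{k-1}}(J^{(k)})`.
(Here `M^{(k)}` is `leibnizDerivedSeries b M (k-1)`.) -/
theorem leibniz_derived_series_of_ideal_plus_derivation_image
    {L : Type*} [AddCommGroup L] [Module ℂ L]
    (b : L →ₗ[ℂ] L →ₗ[ℂ] L)
    (leib : ∀ x y z : L, b (b x y) z = b (b x z) y + b x (b y z))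
    (J : Submodule ℂ L) (hJ : IsLeibnizIdeal b J)
    (D : Module.End ℂ L)
    (hD : ∀ x y : L, D (b x y) = b (D x) y + b x (D y)) :
    ∀ k : ℕ, 1 ≤ k →
      leibnizDerivedSeries b (J ⊔ J.map D) (k - 1) ≤
        J ⊔ (leibnizDerivedSeries b J (k - 1)).map (D ^ (2 ^ (k - 1))) := by
  exact leibniz_derived_series_of_ideal_plus_derivation_image' b J hJ D hD
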